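/- If L is a linear order with no copy of ω₁*, then every scattered suborder of L that is countable is σ-well-ordered; more generally, a linear order with no copy of ω₁* is σ-well-ordered if and only if it is σ-scattered. -/

import Mathlib

open Set

/-- `L` is σ-well-ordered: a countable union of well-ordered suborders. -/
def IsSigmaWellOrdered (L : Type*) [LinearOrder L] : Prop :=
  ∃ A : ℕ → Set L, (∀ n, (A n).IsWF) ∧ (⋃ n, A n) = Set.univ

/-- `L` is σ-scattered: a countable union of scattered suborders. -/
def IsSigmaScattered (L : Type*) [LinearOrder L] : Prop :=
  ∃ A : ℕ → Set L, (∀ n, IsEmpty (ℚ ↪o ↥(A n))) ∧ (⋃ n, A n) = Set.univ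

/-- The first uncountable ordinal ω₁. -/
noncomputable def omega1 : Ordinal := (Cardinal.aleph 1).ord

/-- ω₁* (reversed ω₁) does not embed into `L`. -/
def NoOmega1Star (L : Type*) [LinearOrder L] : Prop :=
  ¬ ∃ f : Ordinal.{0} → L, ∀ ⦃a b : Ordinal⦄, a < b → b < omega1 → f b < f a

section Aux

variable {L : Type*} [LinearOrder L]

/-- `s` is covered by countably many well-founded subsets. -/
def SWO (s : Set L) : Prop :=
  ∃ B : ℕ → Set L, (∀ n, (B n).IsWF) ∧ s ⊆ ⋃ n, B n

lemma SWO.mono {s t : Set L} (h : s ⊆ t) (ht : SWO t) : SWO s := by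
  obtain ⟨B, hB, hc⟩ := ht
  exact ⟨B, hB, h.trans hc⟩

lemma SWO.of_isWF {s : Set L} (h : s.IsWF) : SWO s :=
  ⟨fun _ => s, fun _ => h, fun x hx => mem_iUnion.2 ⟨0, hx⟩⟩

lemma SWO.iUnion {t : ℕ → Set L} (h : ∀ n, SWO (t n)) : SWO (⋃ n, t n) := by
  choose B hB hc using h
  classical
  let e : ℕ ≃ ℕ × ℕ := (Denumerable.eqv (ℕ × ℕ)).symm
  refine ⟨fun k => B (e k).1 (e k).2, fun k => hB _ _, ?_⟩
  intro x hx
  obtain ⟨n, hn⟩ := mem_iUnion.1 hx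
  obtain ⟨m, hm⟩ := mem_iUnion.1 (hc n hn)
  exact mem_iUnion.2 ⟨e.symm (n, m), by simpa using hm⟩

lemma SWO.union {s t : Set L} (hs : SWO s) (ht : SWO t) : SWO (s ∪ t) := by
  have hu : SWO (⋃ n : ℕ, if n = 0 then s else t) := by
    refine SWO.iUnion fun n => ?_
    by_cases hn : n = 0 <;> simp [hn, hs, ht]
  refine SWO.mono ?_ hu
  intro x hx
  rcases hx with hx | hx
  · exact mem_iUnion.2 ⟨0, by simpa using hx⟩
  · exact mem_iUnion.2 ⟨1, by simpa using hx⟩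

lemma no_descending_of_wf {α : Type*} {r : α → α → Prop} (h : WellFounded r) (f : ℕ → α)
    (hf : ∀ n, r (f (n + 1)) (f n)) : False := by
  obtain ⟨K, hK⟩ := mem_range.1 (h.min_mem (range f) ⟨f 0, mem_range_self 0⟩)
  exact h.not_lt_min (range f) (mem_range_self (K + 1))
    (by rw [← hK]; exact hf K)

lemma antitone_eventually_const {W : Set L} (hW : W.IsWF) (w : ℕ → L)
    (hmem : ∀ k, w k ∈ W) (hanti : Antitone w) : ∃ K, ∀ k, K ≤ k → w k = w K := by
  have hr : (range w).IsWF := hW.mono (range_subset_iff.2 hmem)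
  have hne : (range w).Nonempty := ⟨w 0, mem_range_self 0⟩
  obtain ⟨K, hK⟩ := mem_range.1 (hr.min_mem hne)
  refine ⟨K, fun k hk => ?_⟩
  have h1 : w k ≤ w K := hanti hk
  have h2 : ¬ w k < hr.min hne := hr.not_lt_min hne (mem_range_self k)
  rw [← hK] at h2
  exact le_antisymm h1 (not_lt.1 h2)

/-- Every set has a well-founded cofinal subset. -/
lemma exists_wf_cofinal (U : Set L) :
    ∃ W, W ⊆ U ∧ W.IsWF ∧ ∀ u ∈ U, ∃ w ∈ W, u ≤ w := by
  classical
  set r : L → L → Prop := WellOrderingRel with hr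
  have hwf : WellFounded r := (WellOrderingRel.isWellOrder (α := L)).toIsWellFounded.wf
  set W : Set L := {u ∈ U | ∀ v ∈ U, r v u → ¬ u ≤ v} with hW
  have key : ∀ u ∈ W, ∀ v ∈ W, v < u → r v u := by
    intro u hu v hv hlt
    rcases trichotomous (r := r) v u with h | h | h
    · exact h
    · exact absurd h (by rintro rfl; exact lt_irrefl _ hlt)
    · exact absurd hlt.le (hv.2 u hu.1 h)
  refine ⟨W, fun u hu => hu.1, ?_, ?_⟩
  · rw [Set.isWF_iff_no_descending_seq]
    intro f hf hmem
    exact no_descending_of_wf hwf f fun n =>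
      key (f n) (hmem n) (f (n + 1)) (hmem (n + 1)) (hf (Nat.lt_succ_self n))
  · intro u hu
    set V : Set L := {v ∈ U | u ≤ v} with hV
    have hVne : V.Nonempty := ⟨u, hu, le_rfl⟩
    have hw₀V : hwf.min V hVne ∈ V := hwf.min_mem V hVne
    refine ⟨hwf.min V hVne, ⟨hw₀V.1, fun v hv hrv hle => ?_⟩, hw₀V.2⟩
    exact hwf.not_lt_min V (show v ∈ V from ⟨hv, hw₀V.2.trans hle⟩) hrv

/-- If `L` has no copy of ω₁*, every set has a countable coinitial subset. -/
lemma exists_countable_coinitial (hno : NoOmega1Star L) (U : Set L) :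
    ∃ W, W ⊆ U ∧ W.Countable ∧ ∀ u ∈ U, ∃ w ∈ W, w ≤ u := by
  classical
  set r : L → L → Prop := WellOrderingRel with hr
  have hwf : WellFounded r := (WellOrderingRel.isWellOrder (α := L)).toIsWellFounded.wf
  set W : Set L := {u ∈ U | ∀ v ∈ U, r v u → ¬ v ≤ u} with hW
  have key : ∀ u ∈ W, ∀ v ∈ W, u < v → r v u := by
    intro u hu v hv hlt
    rcases trichotomous (r := r) v u with h | h | h
    · exact h
    · exact absurd h (by rintro rfl; exact lt_irrefl _ hlt)
    · exact absurd hlt.le (hv.2 u hu.1 h)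
  have hWU : W ⊆ U := fun u hu => hu.1
  have hcoi : ∀ u ∈ U, ∃ w ∈ W, w ≤ u := by
    intro u hu
    set V : Set L := {v ∈ U | v ≤ u} with hV
    have hVne : V.Nonempty := ⟨u, hu, le_rfl⟩
    have hw₀V : hwf.min V hVne ∈ V := hwf.min_mem V hVne
    refine ⟨hwf.min V hVne, ⟨hw₀V.1, fun v hv hrv hle => ?_⟩, hw₀V.2⟩
    exact hwf.not_lt_min V (show v ∈ V from ⟨hv, hle.trans hw₀V.2⟩) hrv
  refine ⟨W, hWU, ?_, hcoi⟩
  by_contra hWc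
  -- W is an uncountable set well-ordered by `>`; this gives a copy of ω₁*.
  set sR : ↥W → ↥W → Prop := fun a b => (b : L) < (a : L) with hsR
  have hsub : ∀ a b : ↥W, sR a b → r (a : L) (b : L) := by
    intro a b hab
    exact key (b : L) b.2 (a : L) a.2 hab
  have hWFs : WellFounded sR := Subrelation.wf (fun {a b} hab => hsub a b hab)
    (InvImage.wf (fun a : ↥W => (a : L)) hwf)
  haveI : IsTrans ↥W sR := ⟨fun a b c h1 h2 => lt_trans h2 h1⟩
  haveI : IsTrichotomous ↥W sR := by
    constructor
    intro a b hab hba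
    exact Subtype.ext (le_antisymm (not_lt.1 hab) (not_lt.1 hba))
  haveI : IsWellFounded ↥W sR := ⟨hWFs⟩
  haveI : IsWellOrder ↥W sR := {}
  have hcard : (Cardinal.aleph 1) ≤ Cardinal.mk ↥W := by
    have h1 := (Cardinal.countable_iff_lt_aleph_one W).not.1 hWc
    simpa using not_lt.1 h1
  have homega : omega1 ≤ Ordinal.type sR := by
    rw [omega1, Cardinal.ord_le, Ordinal.card_type]
    exact hcard
  have hne : W.Nonempty := by
    rcases W.eq_empty_or_nonempty with h | h
    · exact absurd (by simp [h]) hWc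
    · exact h
  obtain ⟨w₁, hw₁⟩ := hne
  have hlift : Ordinal.lift.{_, 0} omega1 = omega1 := by
    unfold omega1
    rw [Cardinal.lift_ord, Cardinal.lift_aleph, Ordinal.lift_one]
  refine hno ⟨fun α => if h : Ordinal.lift.{_, 0} α < Ordinal.type sR then
    ((Ordinal.enum sR ⟨Ordinal.lift.{_, 0} α, h⟩ : ↥W) : L) else w₁, ?_⟩
  intro a b hab hb
  have hbo : Ordinal.lift.{_, 0} b < Ordinal.type sR :=
    lt_of_lt_of_le (hlift ▸ Ordinal.lift_lt.2 hb) homega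
  have hao : Ordinal.lift.{_, 0} a < Ordinal.type sR :=
    lt_trans (Ordinal.lift_lt.2 hab) hbo
  simp only [dif_pos hao, dif_pos hbo]
  have henum : sR (Ordinal.enum sR ⟨Ordinal.lift.{_, 0} a, hao⟩)
      (Ordinal.enum sR ⟨Ordinal.lift.{_, 0} b, hbo⟩) :=
    Ordinal.enum_lt_enum.2 (Subtype.mk_lt_mk.2 (Ordinal.lift_lt.2 hab))
  simp only [hsR] at henum
  exact henum

/-- Stacking lemma: if every bounded-above initial part of `U` is σ-well-ordered,
then so is `U`. -/
lemma swo_of_upper_pieces (U : Set L) (h : ∀ u ∈ U, SWO (U ∩ Iic u)) : SWO U := by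
  classical
  obtain ⟨W, hWU, hWF, hcof⟩ := exists_wf_cofinal U
  have hBex : ∀ w : L, ∃ B : ℕ → Set L,
      w ∈ W → (∀ n, (B n).IsWF) ∧ U ∩ Iic w ⊆ ⋃ n, B n := by
    intro w
    by_cases hw : w ∈ W
    · obtain ⟨B, hB1, hB2⟩ := h w (hWU hw)
      exact ⟨B, fun _ => ⟨hB1, hB2⟩⟩
    · exact ⟨fun _ => ∅, fun hw' => absurd hw' hw⟩
  choose B hBspec using hBex
  set J : L → Set L := fun w => {u ∈ U | u ≤ w ∧ ∀ w' ∈ W, w' < w → w' < u} with hJ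
  refine ⟨fun n => ⋃ w ∈ W, (J w ∩ B w n), ?_, ?_⟩
  · intro n
    rw [Set.isWF_iff_no_descending_seq]
    intro f hf hmem
    have hwex : ∀ k : ℕ, ∃ w, w ∈ W ∧ f k ∈ J w ∧ f k ∈ B w n := by
      intro k
      have hx := hmem k
      rw [mem_iUnion₂] at hx
      obtain ⟨w', hw, hmemw⟩ := hx
      exact ⟨w', hw, hmemw.1, hmemw.2⟩
    choose w hwW hwJ hwB using hwex
    have hanti : ∀ k, w (k + 1) ≤ w k := by
      intro k
      by_contra hlt
      push_neg at hlt
      have h1 : f k ≤ w k := (hwJ k).2.1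
      have h2 : w k < f (k + 1) := (hwJ (k + 1)).2.2 (w k) (hwW k) hlt
      exact absurd (h1.trans_lt h2) (not_lt.2 (hf (Nat.lt_succ_self k)).le)
    obtain ⟨K, hK⟩ := antitone_eventually_const hWF w hwW (antitone_nat_of_succ_le hanti)
    have hWFn : (B (w K) n).IsWF := ((hBspec (w K)) (hwW K)).1 n
    rw [Set.isWF_iff_no_descending_seq] at hWFn
    refine hWFn (fun m => f (K + m)) (hf.comp_strictMono fun _ _ hm => by omega) ?_
    intro m
    have hmem2 : f (K + m) ∈ B (w (K + m)) n := hwB (K + m)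
    rwa [hK (K + m) (by omega)] at hmem2
  · intro u hu
    obtain ⟨w', hw'W, hw'⟩ := hcof u hu
    set V : Set L := {w ∈ W | u ≤ w} with hV
    have hVWF : V.IsWF := hWF.mono fun v hv => hv.1
    have hVne : V.Nonempty := ⟨w', hw'W, hw'⟩
    have hw₀V : hVWF.min hVne ∈ V := hVWF.min_mem hVne
    set w₀ := hVWF.min hVne with hw₀
    have huJ : u ∈ J w₀ := by
      refine ⟨hu, hw₀V.2, fun w'' hw'' hlt => ?_⟩
      by_contra hle
      push_neg at hle
      exact hVWF.not_lt_min hVne (show w'' ∈ V from ⟨hw'', hle⟩) hlt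
    have hmem3 : u ∈ ⋃ n, B w₀ n := ((hBspec w₀) hw₀V.1).2 ⟨hu, hw₀V.2⟩
    obtain ⟨n, hn⟩ := mem_iUnion.1 hmem3
    exact mem_iUnion.2 ⟨n, mem_iUnion₂.2 ⟨w₀, hw₀V.1, huJ, hn⟩⟩

/-- Dual lemma, using no-ω₁*: if every bounded-below final part of `D` is
σ-well-ordered, so is `D`. -/
lemma swo_of_lower_pieces (hno : NoOmega1Star L) (D : Set L)
    (h : ∀ u ∈ D, SWO (D ∩ Ici u)) : SWO D := by
  obtain ⟨W, hWD, hWc, hcoi⟩ := exists_countable_coinitial hno D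
  rcases D.eq_empty_or_nonempty with hD | ⟨d, hd⟩
  · exact hD ▸ SWO.of_isWF Set.isWF_empty
  · obtain ⟨w', hw'W, _⟩ := hcoi d hd
    have hWne : W.Nonempty := ⟨w', hw'W⟩
    haveI : Countable ↥W := Set.countable_coe_iff.2 hWc
    haveI : Nonempty ↥W := hWne.to_subtype
    obtain ⟨g, hg⟩ := exists_surjective_nat ↥W
    have hcover : D ⊆ ⋃ n, (D ∩ Ici ((g n : L))) := by
      intro u hu
      obtain ⟨w, hwW, hwu⟩ := hcoi u hu
      obtain ⟨n, hn⟩ := hg ⟨w, hwW⟩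
      exact mem_iUnion.2 ⟨n, hu, by rw [hn]; exact hwu⟩
    exact SWO.mono hcover (SWO.iUnion fun n => h (g n : L) (hWD (g n).2))

variable (s : Set L)

/-- Two points are `sE`-related if the part of `s` between them is σ-well-ordered. -/
def sE (a b : L) : Prop := SWO (s ∩ uIcc a b)

lemma sE_refl (a : L) : sE s a a := by
  have hsub : s ∩ uIcc a a ⊆ {a} := by
    rw [uIcc_self]; exact inter_subset_right
  exact SWO.mono hsub (SWO.of_isWF (Set.finite_singleton a).isWF)

lemma sE_symm {a b : L} (h : sE s a b) : sE s b a := by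
  rwa [sE, uIcc_comm]

/-- Each `sE`-class is σ-well-ordered. -/
lemma class_swo (hno : NoOmega1Star L) (x : L) : SWO {z ∈ s | sE s x z} := by
  set C := {z ∈ s | sE s x z} with hC
  have hUs : SWO {z ∈ C | x ≤ z} := by
    refine swo_of_upper_pieces _ fun u hu => ?_
    refine SWO.mono ?_ hu.1.2
    intro z hz
    refine ⟨hz.1.1.1, ?_⟩
    rw [uIcc_of_le hu.2]
    exact ⟨hz.1.2, hz.2⟩
  have hDs : SWO {z ∈ C | z ≤ x} := by
    refine swo_of_lower_pieces hno _ fun u hu => ?_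
    refine SWO.mono ?_ hu.1.2
    intro z hz
    refine ⟨hz.1.1.1, ?_⟩
    rw [uIcc_comm, uIcc_of_le hu.2]
    exact ⟨hz.2, hz.1.2⟩
  refine SWO.mono ?_ (SWO.union hUs hDs)
  intro z hz
  rcases le_total x z with h | h
  · exact Or.inl ⟨hz, h⟩
  · exact Or.inr ⟨hz, h⟩

/-- Splitting: a non-related pair can be split into two non-related pairs. -/
lemma sE_split (hno : NoOmega1Star L) {a b : L} (hab : a < b) (hE : ¬ sE s a b) :
    ∃ z, z ∈ s ∧ a < z ∧ z < b ∧ ¬ sE s a z ∧ ¬ sE s z b := by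
  by_contra hcon
  push_neg at hcon
  apply hE
  have hcover : s ∩ uIcc a b ⊆
      ({a} ∪ {b}) ∪ ({z ∈ s | sE s a z} ∪ {z ∈ s | sE s b z}) := by
    rintro z ⟨hzs, hz⟩
    rw [uIcc_of_le hab.le] at hz
    rcases eq_or_lt_of_le hz.1 with h | h1
    · exact Or.inl (Or.inl h.symm)
    rcases eq_or_lt_of_le hz.2 with h | h2
    · exact Or.inl (Or.inr h)
    by_cases hEaz : sE s a z
    · exact Or.inr (Or.inl ⟨hzs, hEaz⟩)
    · exact Or.inr (Or.inr ⟨hzs, sE_symm s (hcon z hzs h1 h2 hEaz)⟩)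
  exact SWO.mono hcover
    (SWO.union
      (SWO.union (SWO.of_isWF (Set.finite_singleton a).isWF)
        (SWO.of_isWF (Set.finite_singleton b).isWF))
      (SWO.union (class_swo s hno a) (class_swo s hno b)))

/-- `p` is a "good" pair: an increasing non-`sE`-related pair. -/
def sGood (p : L × L) : Prop := p.1 < p.2 ∧ ¬ sE s p.1 p.2

open Classical in
/-- A chosen splitting point of a pair. -/
noncomputable def sMid (p : L × L) : L :=
  if h : ∃ z, z ∈ s ∧ p.1 < z ∧ z < p.2 ∧ ¬ sE s p.1 z ∧ ¬ sE s z p.2 then h.choose else p.1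

lemma sMid_spec (hno : NoOmega1Star L) {p : L × L} (hp : sGood s p) :
    sMid s p ∈ s ∧ p.1 < sMid s p ∧ sMid s p < p.2 ∧
      ¬ sE s p.1 (sMid s p) ∧ ¬ sE s (sMid s p) p.2 := by
  have h : ∃ z, z ∈ s ∧ p.1 < z ∧ z < p.2 ∧ ¬ sE s p.1 z ∧ ¬ sE s z p.2 :=
    sE_split s hno hp.1 hp.2
  rw [sMid, dif_pos h]
  exact h.choose_spec

/-- The two children of a pair. -/
noncomputable def sChild (b : Bool) (p : L × L) : L × L :=
  if b then (sMid s p, p.2) else (p.1, sMid s p)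

/-- Navigation through the tree of pairs. -/
noncomputable def sNav (p : L × L) (σ : List Bool) : L × L :=
  σ.foldl (fun q b => sChild s b q) p

lemma sNav_nil (p : L × L) : sNav s p [] = p := rfl

lemma sNav_cons (p : L × L) (b : Bool) (σ : List Bool) :
    sNav s p (b :: σ) = sNav s (sChild s b p) σ := rfl

lemma sNav_append (p : L × L) (σ τ : List Bool) :
    sNav s p (σ ++ τ) = sNav s (sNav s p σ) τ :=
  List.foldl_append

lemma sGood_child (hno : NoOmega1Star L) {p : L × L} (hp : sGood s p) (b : Bool) :
    sGood s (sChild s b p) := by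
  obtain ⟨h1, h2, h3, h4, h5⟩ := sMid_spec s hno hp
  cases b
  · exact ⟨h2, h4⟩
  · exact ⟨h3, h5⟩

lemma sChild_bounds (hno : NoOmega1Star L) {p : L × L} (hp : sGood s p) (b : Bool) :
    p.1 ≤ (sChild s b p).1 ∧ (sChild s b p).2 ≤ p.2 := by
  obtain ⟨h1, h2, h3, h4, h5⟩ := sMid_spec s hno hp
  cases b
  · exact ⟨le_rfl, h3.le⟩
  · exact ⟨h2.le, le_rfl⟩

lemma sGood_nav (hno : NoOmega1Star L) {p : L × L} (hp : sGood s p) (σ : List Bool) :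
    sGood s (sNav s p σ) := by
  induction σ generalizing p with
  | nil => exact hp
  | cons b σ ih =>
    rw [sNav_cons]
    exact ih (sGood_child s hno hp b)

lemma sNav_bounds (hno : NoOmega1Star L) {p : L × L} (hp : sGood s p) (σ : List Bool) :
    p.1 ≤ (sNav s p σ).1 ∧ (sNav s p σ).2 ≤ p.2 := by
  induction σ generalizing p with
  | nil => exact ⟨le_rfl, le_rfl⟩
  | cons b σ ih =>
    rw [sNav_cons]
    obtain ⟨hc1, hc2⟩ := sChild_bounds s hno hp b
    obtain ⟨hn1, hn2⟩ := ih (sGood_child s hno hp b)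
    exact ⟨hc1.trans hn1, hn2.trans hc2⟩

lemma prefix_decomp (σ τ : List Bool) :
    ∃ p r1 r2, σ = p ++ r1 ∧ τ = p ++ r2 ∧
      (r1 = [] ∨ r2 = [] ∨
        ∃ b1 b2 r1' r2', b1 ≠ b2 ∧ r1 = b1 :: r1' ∧ r2 = b2 :: r2') := by
  induction σ generalizing τ with
  | nil => exact ⟨[], [], τ, rfl, rfl, Or.inl rfl⟩
  | cons a σ' ih =>
    cases τ with
    | nil => exact ⟨[], a :: σ', [], rfl, rfl, Or.inr (Or.inl rfl)⟩
    | cons c τ' =>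
      by_cases hac : a = c
      · obtain ⟨p, r1, r2, h1, h2, h3⟩ := ih τ'
        subst hac
        exact ⟨a :: p, r1, r2, by simp [h1], by simp [h2], h3⟩
      · exact ⟨[], a :: σ', c :: τ', rfl, rfl,
          Or.inr (Or.inr ⟨a, c, σ', τ', hac, rfl, rfl⟩)⟩

/-- Density of the set of tree nodes. -/
lemma dense_nodes (hno : NoOmega1Star L) {p₀ : L × L} (h₀ : sGood s p₀) {σ τ : List Bool}
    (hlt : sMid s (sNav s p₀ σ) < sMid s (sNav s p₀ τ)) :
    ∃ ρ, sMid s (sNav s p₀ σ) < sMid s (sNav s p₀ ρ) ∧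
      sMid s (sNav s p₀ ρ) < sMid s (sNav s p₀ τ) := by
  obtain ⟨p, r1, r2, hσ, hτ, hcase⟩ := prefix_decomp σ τ
  have hq : sGood s (sNav s p₀ p) := sGood_nav s hno h₀ p
  set q := sNav s p₀ p with hqdef
  have hcf2 : ∀ p' : L × L, (sChild s false p').2 = sMid s p' := fun p' => by simp [sChild]
  have hcf1 : ∀ p' : L × L, (sChild s false p').1 = p'.1 := fun p' => by simp [sChild]
  have hct1 : ∀ p' : L × L, (sChild s true p').1 = sMid s p' := fun p' => by simp [sChild]
  have hct2 : ∀ p' : L × L, (sChild s true p').2 = p'.2 := fun p' => by simp [sChild]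
  have Hbelow : ∀ p' : L × L, sGood s p' → ∀ r : List Bool,
      sMid s (sNav s (sChild s false p') r) < sMid s p' := by
    intro p' hp' r
    have hg := sGood_child s hno hp' false
    have h1 := (sMid_spec s hno (sGood_nav s hno hg r)).2.2.1
    have h2 := (sNav_bounds s hno hg r).2
    exact h1.trans_le (h2.trans (hcf2 p').le)
  have Habove : ∀ p' : L × L, sGood s p' → ∀ r : List Bool,
      sMid s p' < sMid s (sNav s (sChild s true p') r) := by
    intro p' hp' r
    have hg := sGood_child s hno hp' true
    have h1 := (sMid_spec s hno (sGood_nav s hno hg r)).2.1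
    have h2 := (sNav_bounds s hno hg r).1
    exact lt_of_le_of_lt ((hct1 p').symm.le.trans h2) h1
  rcases hcase with h | h | ⟨b1, b2, r1', r2', hne, hr1, hr2⟩
  · -- r1 = [] : σ = p
    subst h
    rw [List.append_nil] at hσ
    subst hσ
    cases r2 with
    | nil =>
      rw [List.append_nil] at hτ
      subst hτ
      exact absurd hlt (lt_irrefl _)
    | cons b r2' =>
      subst hτ
      have hnavτ : sNav s p₀ (σ ++ b :: r2') = sNav s (sChild s b q) r2' := by
        rw [sNav_append, sNav_cons]
      cases b with
      | false =>
        rw [hnavτ] at hlt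
        exact absurd hlt (not_lt.2 (Hbelow q hq r2').le)
      | true =>
        set nt := sNav s p₀ (σ ++ true :: r2') with hntdef
        have hnt : sGood s nt := sGood_nav s hno h₀ _
        refine ⟨(σ ++ true :: r2') ++ [false], ?_, ?_⟩
        · -- sMid q < z ρ
          have hρ : sNav s p₀ ((σ ++ true :: r2') ++ [false]) = sChild s false nt := by
            rw [sNav_append, sNav_cons, sNav_nil, ← hntdef]
          rw [hρ]
          have h1 : (sChild s false nt).1 < sMid s (sChild s false nt) :=
            (sMid_spec s hno (sGood_child s hno hnt false)).2.1
          rw [hcf1 nt] at h1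
          have h2 : (sChild s true q).1 ≤ nt.1 := by
            rw [hnavτ]
            exact (sNav_bounds s hno (sGood_child s hno hq true) r2').1
          rw [hct1 q] at h2
          exact lt_of_le_of_lt h2 h1
        · -- z ρ < z τ
          have hρ : sNav s p₀ ((σ ++ true :: r2') ++ [false]) = sChild s false nt := by
            rw [sNav_append, sNav_cons, sNav_nil, ← hntdef]
          rw [hρ]
          have := Hbelow nt hnt []
          rwa [sNav_nil] at this
  · -- r2 = [] : τ = p
    subst h
    rw [List.append_nil] at hτ
    subst hτ
    cases r1 with
    | nil =>
      rw [List.append_nil] at hσ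
      subst hσ
      exact absurd hlt (lt_irrefl _)
    | cons b r1' =>
      subst hσ
      have hnavσ : sNav s p₀ (τ ++ b :: r1') = sNav s (sChild s b q) r1' := by
        rw [sNav_append, sNav_cons]
      cases b with
      | true =>
        rw [hnavσ] at hlt
        exact absurd hlt (not_lt.2 (Habove q hq r1').le)
      | false =>
        set ns := sNav s p₀ (τ ++ false :: r1') with hnsdef
        have hns : sGood s ns := sGood_nav s hno h₀ _
        refine ⟨(τ ++ false :: r1') ++ [true], ?_, ?_⟩
        · -- z σ < z ρ
          have hρ : sNav s p₀ ((τ ++ false :: r1') ++ [true]) = sChild s true ns := by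
            rw [sNav_append, sNav_cons, sNav_nil, ← hnsdef]
          rw [hρ]
          have := Habove ns hns []
          rwa [sNav_nil] at this
        · -- z ρ < sMid q
          have hρ : sNav s p₀ ((τ ++ false :: r1') ++ [true]) = sChild s true ns := by
            rw [sNav_append, sNav_cons, sNav_nil, ← hnsdef]
          rw [hρ]
          have h1 : sMid s (sChild s true ns) < (sChild s true ns).2 :=
            (sMid_spec s hno (sGood_child s hno hns true)).2.2.1
          rw [hct2 ns] at h1
          have h2 : ns.2 ≤ (sChild s false q).2 := by
            rw [hnavσ]
            exact (sNav_bounds s hno (sGood_child s hno hq false) r1').2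
          rw [hcf2 q] at h2
          exact h1.trans_le h2
  · -- branching case
    subst hr1; subst hr2; subst hσ; subst hτ
    have hnavσ : sNav s p₀ (p ++ b1 :: r1') = sNav s (sChild s b1 q) r1' := by
      rw [sNav_append, sNav_cons]
    have hnavτ : sNav s p₀ (p ++ b2 :: r2') = sNav s (sChild s b2 q) r2' := by
      rw [sNav_append, sNav_cons]
    cases b1 <;> cases b2
    · exact absurd rfl hne
    · -- b1 = false, b2 = true : witness p
      refine ⟨p, ?_, ?_⟩
      · rw [hnavσ, ← hqdef]
        exact Hbelow q hq r1'
      · rw [hnavτ, ← hqdef]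
        exact Habove q hq r2'
    · -- b1 = true, b2 = false : contradiction
      rw [hnavσ, hnavτ] at hlt
      exact absurd ((Hbelow q hq r2').trans (Habove q hq r1')) (not_lt.2 hlt.le)
    · exact absurd rfl hne

/-- The main lemma: a scattered suborder of `L` is σ-well-ordered. -/
lemma swo_of_scattered (hno : NoOmega1Star L) (hs : IsEmpty (ℚ ↪o ↥s)) : SWO s := by
  by_cases hall : ∀ a b : L, sE s a b
  · rcases s.eq_empty_or_nonempty with h | ⟨x, hx⟩
    · exact h ▸ SWO.of_isWF Set.isWF_empty
    · have hsub : s ⊆ {z ∈ s | sE s x z} := fun z hz => ⟨hz, hall x z⟩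
      exact SWO.mono hsub (class_swo s hno x)
  · exfalso
    push_neg at hall
    obtain ⟨a, b, hab⟩ := hall
    obtain ⟨a, b, hlt, hab⟩ : ∃ a b : L, a < b ∧ ¬ sE s a b := by
      rcases lt_trichotomy a b with h | h | h
      · exact ⟨a, b, h, hab⟩
      · exact absurd (h ▸ sE_refl s a) hab
      · exact ⟨b, a, h, fun hE => hab (sE_symm s hE)⟩
    have h₀ : sGood s (a, b) := ⟨hlt, hab⟩
    set z : List Bool → L := fun σ => sMid s (sNav s (a, b) σ) with hz
    have hzs : ∀ σ, z σ ∈ s := fun σ => (sMid_spec s hno (sGood_nav s hno h₀ σ)).1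
    have hNs : range z ⊆ s := by rintro _ ⟨σ, rfl⟩; exact hzs σ
    haveI : DenselyOrdered ↥(range z) := by
      constructor
      rintro ⟨x1, σ, rfl⟩ ⟨x2, τ, rfl⟩ hlt'
      obtain ⟨ρ, h1, h2⟩ := dense_nodes s hno h₀ (show z σ < z τ from hlt')
      exact ⟨⟨z ρ, mem_range_self ρ⟩, Subtype.mk_lt_mk.2 h1, Subtype.mk_lt_mk.2 h2⟩
    haveI : Nontrivial ↥(range z) := by
      have h1 : z [false] < z [] := by
        have hspec := (sMid_spec s hno (sGood_child s hno h₀ false)).2.2.1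
        have hc : (sChild s false (a, b)).2 = sMid s (a, b) := by simp [sChild]
        rw [hc] at hspec
        simpa [hz, sNav_cons, sNav_nil] using hspec
      exact ⟨⟨z [false], mem_range_self _⟩, ⟨z [], mem_range_self _⟩,
        fun h => absurd (congrArg Subtype.val h) (ne_of_lt h1)⟩
    obtain ⟨g⟩ := Order.embedding_from_countable_to_dense (α := ℚ) (β := ↥(range z))
    refine hs.false (OrderEmbedding.ofStrictMono
      (fun q => (⟨(g q : L), hNs (g q).2⟩ : ↥s)) ?_)
    intro q q' hqq
    exact Subtype.mk_lt_mk.2 (Subtype.coe_lt_coe.2 (g.lt_iff_lt.2 hqq))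

end Aux

/-- Lemma 2.8: if `L` has no copy of ω₁*, then every countable scattered suborder
of `L` is σ-well-ordered, and more generally `L` is σ-well-ordered iff it is
σ-scattered. -/
theorem sigmaWellOrdered_iff_sigmaScattered_of_noOmega1Star
    (L : Type*) [LinearOrder L] (hno : NoOmega1Star L) :
    (∀ s : Set L, s.Countable → IsEmpty (ℚ ↪o ↥s) → IsSigmaWellOrdered ↥s) ∧
    (IsSigmaWellOrdered L ↔ IsSigmaScattered L) := by
  constructor
  · intro s hc _
    haveI : Countable ↥s := hc.to_subtype
    rcases isEmpty_or_nonempty ↥s with he | hne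
    · refine ⟨fun _ => ∅, fun _ => Set.isWF_empty, ?_⟩
      exact Set.eq_univ_of_forall fun x => (he.false x).elim
    · obtain ⟨f, hf⟩ := exists_surjective_nat ↥s
      refine ⟨fun n => {f n}, fun n => (Set.finite_singleton _).isWF, ?_⟩
      refine Set.eq_univ_of_forall fun x => ?_
      obtain ⟨n, rfl⟩ := hf x
      exact Set.mem_iUnion.2 ⟨n, rfl⟩
  · constructor
    · rintro ⟨A, hWF, hcov⟩
      refine ⟨A, fun n => ?_, hcov⟩
      refine ⟨fun f => ?_⟩
      have hanti : StrictAnti (fun k : ℕ => ((f (-(k : ℚ)) : ↥(A n)) : L)) := by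
        intro k l hkl
        have hq : (-(l : ℚ)) < -(k : ℚ) := by
          have : (k : ℚ) < (l : ℚ) := by exact_mod_cast hkl
          linarith
        exact Subtype.coe_lt_coe.2 (f.lt_iff_lt.2 hq)
      exact Set.isWF_iff_no_descending_seq.1 (hWF n) _ hanti
        (fun k => (f (-(k : ℚ))).2)
    · rintro ⟨A, hsc, hcov⟩
      have huniv : SWO (Set.univ : Set L) := by
        rw [← hcov]
        exact SWO.iUnion fun n => swo_of_scattered (A n) hno (hsc n)
      obtain ⟨B, hB, hBc⟩ := huniv
      exact ⟨B, hB, Set.eq_univ_of_univ_subset hBc⟩
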